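/- Suppose real numbers r', ρ^{AB}_{ij}, ρ^{AC}_{ik} (i, j, k ∈ {0,1}) satisfy, for every j, k ∈ {0,1}, that the 2×2 matrix [[1, r'],[r', 1]] minus M_{jk}M_{jk}^T is positive semidefinite, where M_{jk} = [[ρ^{AC}_{1k}, ρ^{AB}_{1j}],[ρ^{AC}_{0k}, ρ^{AB}_{0j}]]. Then B_{AB}² + B_{AC}² ≤ 8, where B_{AB} = ρ^{AB}_{00} + ρ^{AB}_{10} + ρ^{AB}_{01} - ρ^{AB}_{11} and B_{AC} = ρ^{AC}_{00} + ρ^{AC}_{10} + ρ^{AC}_{01} - ρ^{AC}_{11}. -/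

import Mathlib

lemma aux_psd (a b c d r : ℝ)
    (hP : (!![(1:ℝ), r; r, 1] - !![a,b;c,d] * Matrix.transpose !![a,b;c,d]).PosSemidef) :
    0 ≤ 1 - a^2 - b^2 ∧ 0 ≤ 1 - c^2 - d^2 ∧
      (r - a*c - b*d)^2 ≤ (1 - a^2 - b^2) * (1 - c^2 - d^2) := by
  have q : ∀ x y : ℝ,
      0 ≤ (1 - a^2 - b^2)*x^2 + 2*(r - a*c - b*d)*x*y + (1 - c^2 - d^2)*y^2 := by
    intro x y
    have := hP.dotProduct_mulVec_nonneg ![x, y]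
    simp [Matrix.mulVec, dotProduct, Fin.sum_univ_two, Matrix.mul_apply,
      Matrix.transpose_apply, Matrix.vecMul, Matrix.vecHead, Matrix.vecTail] at this
    nlinarith [this]
  have hA : 0 ≤ 1 - a^2 - b^2 := by nlinarith [q 1 0]
  have hC : 0 ≤ 1 - c^2 - d^2 := by nlinarith [q 0 1]
  refine ⟨hA, hC, ?_⟩
  have hd := discrim_le_zero (a := 1 - a^2 - b^2) (b := 2*(r - a*c - b*d))
    (c := 1 - c^2 - d^2) (fun x => by nlinarith [q x 1])
  rw [discrim] at hd
  nlinarith [hd]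

theorem stmt_9 (ρAB ρAC : Fin 2 → Fin 2 → ℝ) (r' : ℝ)
    (h : ∀ j k : Fin 2,
      (!![(1 : ℝ), r'; r', 1] -
        !![ρAC 1 k, ρAB 1 j; ρAC 0 k, ρAB 0 j] *
          Matrix.transpose !![ρAC 1 k, ρAB 1 j; ρAC 0 k, ρAB 0 j]).PosSemidef) :
    (ρAB 0 0 + ρAB 1 0 + ρAB 0 1 - ρAB 1 1) ^ 2 +
      (ρAC 0 0 + ρAC 1 0 + ρAC 0 1 - ρAC 1 1) ^ 2 ≤ 8 := by
  obtain ⟨hA0, hA0', hd0⟩ := aux_psd _ _ _ _ _ (h 0 0)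
  obtain ⟨hA1, hA1', hd1⟩ := aux_psd _ _ _ _ _ (h 1 1)
  set a0 := ρAC 1 0; set b0 := ρAB 1 0; set c0 := ρAC 0 0; set d0 := ρAB 0 0
  set a1 := ρAC 1 1; set b1 := ρAB 1 1; set c1 := ρAC 0 1; set d1 := ρAB 0 1
  have key1 : 2*(a0*c0 + b0*d0 - r') ≤ (1 - a0^2 - b0^2) + (1 - c0^2 - d0^2) := by
    nlinarith [hd0, sq_nonneg ((1 - a0^2 - b0^2) - (1 - c0^2 - d0^2)), hA0, hA0',
      sq_nonneg ((1 - a0^2 - b0^2) + (1 - c0^2 - d0^2) - 2*(a0*c0 + b0*d0 - r'))]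
  have key2 : 2*(r' - a1*c1 - b1*d1) ≤ (1 - a1^2 - b1^2) + (1 - c1^2 - d1^2) := by
    nlinarith [hd1, sq_nonneg ((1 - a1^2 - b1^2) - (1 - c1^2 - d1^2)), hA1, hA1',
      sq_nonneg ((1 - a1^2 - b1^2) + (1 - c1^2 - d1^2) - 2*(r' - a1*c1 - b1*d1))]
  nlinarith [key1, key2, sq_nonneg (d0 + b0 - (d1 - b1)), sq_nonneg (c0 + a0 - (c1 - a1))]
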